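/- (Frink metrization criterion) Let Y be a topological space such that every point b has a monotonically decreasing sequence of neighborhoods V₁(b) ⊇ V₂(b) ⊇ ⋯ forming a neighborhood basis at b with ∩_i V_i(b) = {b}, and such that for every b and every i there exists j = j(b,i) > i with the property: if V_j(a) ∩ V_j(b) ≠ ∅ for some point a, then V_j(a) ⊆ V_i(b). Then Y is metrizable. -/

import Mathlib

open Set Filter

/-- **Frink's metrization criterion.** If every point `b` of a topological
space `Y` has a decreasing neighborhood basis `V₁(b) ⊇ V₂(b) ⊇ ⋯` with `⋂ i, V_i(b) = {b}`,
and for every `b, i` there is `j > i` such that `V_j(a) ∩ V_j(b) ≠ ∅` implies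
`V_j(a) ⊆ V_i(b)`, then `Y` is metrizable. -/
theorem frink_metrization {Y : Type*} [TopologicalSpace Y]
    (V : Y → ℕ → Set Y)
    (hnbhd : ∀ b : Y, ∀ i : ℕ, V b i ∈ nhds b)
    (hdecr : ∀ b : Y, ∀ i : ℕ, V b (i + 1) ⊆ V b i)
    (hbasis : ∀ b : Y, ∀ U ∈ nhds b, ∃ i : ℕ, V b i ⊆ U)
    (hinter : ∀ b : Y, (⋂ i : ℕ, V b i) = {b})
    (hfrink : ∀ b : Y, ∀ i : ℕ, ∃ j : ℕ, i < j ∧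
      ∀ a : Y, (V a j ∩ V b j).Nonempty → V a j ⊆ V b i) :
    TopologicalSpace.MetrizableSpace Y := by
  classical
  choose J hJgt hJ using hfrink
  -- `V b` is antitone
  have hmono : ∀ (b : Y) {i m : ℕ}, i ≤ m → V b m ⊆ V b i := by
    intro b i m h
    induction m with
    | zero =>
      have : i = 0 := Nat.le_zero.mp h
      subst this; exact subset_rfl
    | succ m ih =>
      rcases Nat.lt_or_ge i (m + 1) with h' | h'
      · exact (hdecr b m).trans (ih (Nat.lt_succ_iff.mp h'))
      · have : i = m + 1 := le_antisymm h h'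
        subst this; exact subset_rfl
  have hmem : ∀ b i, b ∈ V b i := fun b i => mem_of_mem_nhds (hnbhd b i)
  -- the space is T1
  haveI hT1 : T1Space Y := by
    refine t1Space_iff_exists_open.mpr ?_
    intro x y hxy
    have hy : ∃ i, y ∉ V x i := by
      by_contra h
      push_neg at h
      have : y ∈ ⋂ i, V x i := mem_iInter.mpr h
      rw [hinter x] at this
      exact hxy this.symm
    obtain ⟨i, hi⟩ := hy
    obtain ⟨O, hOsub, hOopen, hxO⟩ := mem_nhds_iff.mp (hnbhd x i)
    exact ⟨O, hOopen, hxO, fun h => hi (hOsub h)⟩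
  -- iterate Frink's index function
  let k : Y → ℕ → ℕ := fun b n => Nat.rec 0 (fun _ kn => J b kn) n
  have hks : ∀ b n, k b (n + 1) = J b (k b n) := fun _ _ => rfl
  have hklt : ∀ b n, k b n < k b (n + 1) := fun b n => hJgt b (k b n)
  have hkge : ∀ b n, n ≤ k b n := by
    intro b n
    induction n with
    | zero => exact Nat.zero_le _
    | succ n ih => exact Nat.succ_le_of_lt (lt_of_le_of_lt ih (hklt b n))
  have hkmono : ∀ (b : Y) {n m : ℕ}, n ≤ m → k b n ≤ k b m := by
    intro b n m h
    induction h with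
    | refl => exact le_rfl
    | step h ih => exact ih.trans (le_of_lt (hklt b _))
  set U : Y → ℕ → Set Y := fun b n => V b (k b n) with hUdef
  set T : ℕ → Set (Y × Y) := fun n => ⋃ b, U b n ×ˢ U b n with hTdef
  have hmemT : ∀ {n : ℕ} {p : Y × Y}, p ∈ T n ↔ ∃ b, p.1 ∈ U b n ∧ p.2 ∈ U b n := by
    intro n p
    simp [hTdef, mem_iUnion, Set.mem_prod]
  have hUmemT : ∀ {n : ℕ} {b x y : Y}, x ∈ U b n → y ∈ U b n → (x, y) ∈ T n :=
    fun {n b x y} hx hy => hmemT.mpr ⟨b, hx, hy⟩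
  have hUdecr : ∀ (b : Y) {n m : ℕ}, n ≤ m → U b m ⊆ U b n :=
    fun b {n m} h => hmono b (hkmono b h)
  -- the key dichotomy from Frink's condition
  have key : ∀ (b : Y) (n : ℕ) (a : Y), (V a (k b (n + 1)) ∩ V b (k b (n + 1))).Nonempty →
      V a (k b (n + 1)) ⊆ U b n := by
    intro b n a h
    have h2 := hJ b (k b n) a
    rw [← hks b n] at h2
    exact h2 h
  have hdich : ∀ (n : ℕ) (a b : Y), (U a (n + 1) ∩ U b (n + 1)).Nonempty →
      U a (n + 1) ⊆ U b n ∨ U b (n + 1) ⊆ U a n := by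
    rintro n a b ⟨x, hxa, hxb⟩
    rcases le_total (k a (n + 1)) (k b (n + 1)) with h | h
    · right
      exact (hmono b h).trans (key a n b ⟨x, hmono b h hxb, hxa⟩)
    · left
      exact (hmono a h).trans (key b n a ⟨x, hmono a h hxa, hxb⟩)
  -- the filter generated by the `T n`
  set F : Filter (Y × Y) := ⨅ n, 𝓟 (T n) with hFdef
  have hTanti : ∀ {n m : ℕ}, n ≤ m → T m ⊆ T n := by
    intro n m h p hp
    obtain ⟨x, y⟩ := p
    rcases hmemT.mp hp with ⟨b, h1, h2⟩
    exact hmemT.mpr ⟨b, hUdecr b h h1, hUdecr b h h2⟩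
  have hdir : Directed (· ≥ ·) T := fun m n =>
    ⟨max m n, hTanti (le_max_left m n), hTanti (le_max_right m n)⟩
  have hB : F.HasBasis (fun _ : ℕ => True) T := hasBasis_iInf_principal hdir
  have hTcomp : ∀ n, SetRel.comp (T (n + 1)) (T (n + 1)) ⊆ T n := by
    rintro n ⟨x, z⟩ ⟨y, (hxy : (x, y) ∈ T (n+1)), (hyz : (y, z) ∈ T (n+1))⟩
    rcases (hmemT (n := n + 1) (p := (x, y))).mp hxy with ⟨q, hxq, hyq⟩
    rcases (hmemT (n := n + 1) (p := (y, z))).mp hyz with ⟨s, hys, hzs⟩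
    rcases hdich n q s ⟨y, hyq, hys⟩ with h | h
    · exact hUmemT (h hxq) (hUdecr s (Nat.le_succ n) hzs)
    · exact hUmemT (hUdecr q (Nat.le_succ n) hxq) (h hzs)
  have hTsymm : ∀ n (p : Y × Y), p ∈ T n → p.swap ∈ T n := by
    rintro n ⟨x, y⟩ hp
    rcases hmemT.mp hp with ⟨b, h1, h2⟩
    exact hmemT.mpr ⟨b, h2, h1⟩
  -- construct a uniform space structure inducing the given topology
  letI Unif : UniformSpace Y :=
    { toTopologicalSpace := ‹TopologicalSpace Y›
      uniformity := F
      symm := by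
        rw [hB.tendsto_iff hB]
        intro n _
        exact ⟨n, trivial, fun p hp => hTsymm n p hp⟩
      comp := by
        refine (HasBasis.le_basis_iff (hB.lift' (monotone_id.relComp monotone_id)) hB).2 ?_
        intro n _
        exact ⟨n + 1, trivial, hTcomp n⟩
      nhds_eq_comap_uniformity := by
        intro x
        refine le_antisymm ?_ ?_
        · -- every "ball" of `T n` at `x` is a neighborhood of `x`
          refine ((hB.comap (Prod.mk x)).ge_iff).mpr ?_
          intro n _
          refine mem_of_superset (hnbhd x (k x n)) ?_
          intro y hy
          exact hUmemT (hmem x (k x n)) hy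
        · -- every neighborhood of `x` contains a "ball" of some `T n`
          intro s hs
          obtain ⟨i, hi⟩ := hbasis x s hs
          refine mem_comap.mpr ⟨T (J x i), hB.mem_of_mem trivial, ?_⟩
          intro y hy
          rcases hmemT.mp hy with ⟨c, hxc, hyc⟩
          have h1 : J x i ≤ k c (J x i) := hkge c (J x i)
          have hxc' : x ∈ V c (J x i) := hmono c h1 hxc
          have hsub : V c (J x i) ⊆ V x i :=
            hJ x i c ⟨x, hxc', hmem x (J x i)⟩
          exact hi (hsub (hmono c h1 hyc)) }
  haveI : IsCountablyGenerated (uniformity Y) := isCountablyGenerated_seq T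
  exact UniformSpace.metrizableSpace
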